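/- The torsion subgroup of the string group L(p) has cardinality (∏_{i=1}^t p_i)/p, where p = lcm(p_1,...,p_t). -/

import Mathlib

open scoped BigOperators

def stringRelators {ι : Type} [DecidableEq ι] (p : ι → ℕ) : Set (ι → ℤ) :=
  { v | ∃ i j : ι, v = (p i : ℤ) • Pi.single i 1 - (p j : ℤ) • Pi.single j 1 }

abbrev StringGroup {ι : Type} [DecidableEq ι] (p : ι → ℕ) : Type :=
  (ι → ℤ) ⧸ AddSubgroup.closure (stringRelators p)

def xgen {ι : Type} [DecidableEq ι] (p : ι → ℕ) (i : ι) : StringGroup p :=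
  QuotientAddGroup.mk (Pi.single i 1)

def canon {ι : Type} [DecidableEq ι] (p : ι → ℕ) (i : ι) : StringGroup p :=
  (p i : ℤ) • xgen p i

section Aux
variable {ι : Type} [DecidableEq ι] [Fintype ι]

lemma sum_single_eq (v : ι → ℤ) : ∑ i, Pi.single i (v i) = v := by
  funext j
  rw [Finset.sum_apply]
  simp [Pi.single_apply]

def rhoHom (p : ι → ℕ) (n : ℕ) : (ι → ℤ) →+ ℤ where
  toFun v := ∑ i, v i * ((n / p i : ℕ) : ℤ)
  map_zero' := by simp
  map_add' v w := by simp [add_mul, Finset.sum_add_distrib]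

def piCastHom (p : ι → ℕ) : (ι → ℤ) →+ (∀ i, ZMod (p i)) where
  toFun v i := (v i : ZMod (p i))
  map_zero' := by funext i; simp
  map_add' v w := by funext i; simp

end Aux

section Aux2
variable {ι : Type} [DecidableEq ι] [Fintype ι]

def coordHom (p : ι → ℕ) (n : ℕ) (hpn : ∀ i, p i ∣ n) (i : ι) : ZMod (p i) →+ ZMod n :=
  ZMod.lift (p i) ⟨{ toFun := fun x => (x : ZMod n) * ((n / p i : ℕ) : ZMod n)
                     map_zero' := by simp
                     map_add' := fun a b => by push_cast; ring }, by
    show ((p i : ℤ) : ZMod n) * ((n / p i : ℕ) : ZMod n) = 0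
    push_cast
    rw [← Nat.cast_mul, Nat.mul_div_cancel' (hpn i), ZMod.natCast_self]⟩

def phiHom (p : ι → ℕ) (n : ℕ) (hpn : ∀ i, p i ∣ n) : (∀ i, ZMod (p i)) →+ ZMod n :=
  ∑ i, (coordHom p n hpn i).comp (Pi.evalAddMonoidHom _ i)

lemma coordHom_intCast (p : ι → ℕ) (n : ℕ) (hpn : ∀ i, p i ∣ n) (i : ι) (x : ℤ) :
    coordHom p n hpn i ((x : ZMod (p i))) = (x : ZMod n) * ((n / p i : ℕ) : ZMod n) := by
  simp [coordHom]

lemma phiHom_apply (p : ι → ℕ) (n : ℕ) (hpn : ∀ i, p i ∣ n) (b : ∀ i, ZMod (p i)) :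
    phiHom p n hpn b = ∑ i, coordHom p n hpn i (b i) := by
  simp [phiHom, AddMonoidHom.finset_sum_apply]

lemma phiHom_piCast (p : ι → ℕ) (n : ℕ) (hpn : ∀ i, p i ∣ n) (v : ι → ℤ) :
    phiHom p n hpn (piCastHom p v) = ((rhoHom p n v : ℤ) : ZMod n) := by
  rw [phiHom_apply]
  show _ = ((∑ i, v i * ((n / p i : ℕ) : ℤ) : ℤ) : ZMod n)
  rw [Int.cast_sum]
  refine Finset.sum_congr rfl fun i _ => ?_
  show coordHom p n hpn i ((v i : ZMod (p i))) = _
  rw [coordHom_intCast, Int.cast_mul, Int.cast_natCast]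

end Aux2

section Aux3
variable {ι : Type} [DecidableEq ι] [Fintype ι] [Nonempty ι]

lemma rhoHom_apply (p : ι → ℕ) (n : ℕ) (v : ι → ℤ) :
    rhoHom p n v = ∑ i, v i * ((n / p i : ℕ) : ℤ) := rfl

lemma piCastHom_apply (p : ι → ℕ) (v : ι → ℤ) (i : ι) :
    piCastHom p v i = ((v i : ℤ) : ZMod (p i)) := rfl

lemma rho_smul_single (p : ι → ℕ) (n : ℕ) (hpn : ∀ i, p i ∣ n) (i : ι) :
    rhoHom p n ((p i : ℤ) • Pi.single i 1) = (n : ℤ) := by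
  rw [rhoHom_apply, Finset.sum_eq_single i]
  · simp only [Pi.smul_apply, Pi.single_eq_same, smul_eq_mul, mul_one, ← Nat.cast_mul,
      Nat.mul_div_cancel' (hpn i)]
  · intro k _ hk
    simp [Pi.single_apply, hk.symm]
  · simp

lemma piCast_smul_single (p : ι → ℕ) (i : ι) :
    piCastHom p ((p i : ℤ) • Pi.single i 1) = 0 := by
  funext k
  show piCastHom p _ k = 0
  rw [piCastHom_apply]
  rcases eq_or_ne k i with rfl | hk
  · simp
  · simp [Pi.single_apply, hk]

lemma mem_stringClosure_iff (p : ι → ℕ) (n : ℕ) (hpn : ∀ i, p i ∣ n) (hn : n ≠ 0) (v : ι → ℤ) :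
    v ∈ AddSubgroup.closure (stringRelators p) ↔ rhoHom p n v = 0 ∧ piCastHom p v = 0 := by
  constructor
  · intro hv
    have hsub : AddSubgroup.closure (stringRelators p) ≤
        (rhoHom p n).ker ⊓ (piCastHom p).ker := by
      rw [AddSubgroup.closure_le]
      rintro w ⟨i, j, rfl⟩
      constructor
      · show rhoHom p n _ = 0
        rw [map_sub, rho_smul_single p n hpn i, rho_smul_single p n hpn j, sub_self]
      · show piCastHom p _ = 0
        rw [map_sub, piCast_smul_single, piCast_smul_single, sub_self]
    exact hsub hv
  · rintro ⟨h1, h2⟩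
    have hdvd : ∀ i, (p i : ℤ) ∣ v i := by
      intro i
      rw [← ZMod.intCast_zmod_eq_zero_iff_dvd]
      exact congrFun h2 i
    choose m hm using hdvd
    set i0 : ι := Classical.arbitrary ι
    have hsum : ∑ i, m i = 0 := by
      have : (∑ i, v i * ((n / p i : ℕ) : ℤ)) = (∑ i, m i) * (n : ℤ) := by
        rw [Finset.sum_mul]
        refine Finset.sum_congr rfl fun i _ => ?_
        rw [hm i]
        rw [mul_comm (p i : ℤ) (m i), mul_assoc, ← Nat.cast_mul,
          Nat.mul_div_cancel' (hpn i)]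
      have h1' : (∑ i, v i * ((n / p i : ℕ) : ℤ)) = 0 := by rw [← rhoHom_apply p n v]; exact h1
      rw [this] at h1'
      have : (n : ℤ) ≠ 0 := by exact_mod_cast hn
      exact (mul_eq_zero.mp h1').resolve_right this
    have hv : v = ∑ i, m i • ((p i : ℤ) • Pi.single i 1 - (p i0 : ℤ) • Pi.single i0 1) := by
      simp only [smul_sub]
      rw [Finset.sum_sub_distrib, ← Finset.sum_smul, hsum, zero_smul, sub_zero]
      rw [← sum_single_eq v]
      refine Finset.sum_congr rfl fun i _ => ?_
      funext k
      rcases eq_or_ne k i with rfl | hk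
      · simp [hm k, mul_comm]
      · simp [Pi.single_apply, hk]
    rw [hv]
    refine AddSubgroup.sum_mem _ fun i _ =>
      AddSubgroup.zsmul_mem _ (AddSubgroup.subset_closure ?_) _
    exact ⟨i, i0, rfl⟩

end Aux3

section Aux4
variable {ι : Type} [DecidableEq ι] [Fintype ι]

lemma phiHom_single_mem (p : ι → ℕ) (n : ℕ) (hpn : ∀ i, p i ∣ n) (i : ι) (x : ℤ) :
    ((x : ZMod n) * ((n / p i : ℕ) : ZMod n)) ∈ (phiHom p n hpn).range := by
  refine ⟨Pi.single i ((x : ZMod (p i))), ?_⟩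
  rw [phiHom_apply, Finset.sum_eq_single i]
  · rw [Pi.single_eq_same, coordHom_intCast]
  · intro k _ hk
    rw [Pi.single_eq_of_ne hk, map_zero]
  · simp

lemma phiHom_lcm_surjective (p : ι → ℕ) (hp0 : ∀ i, p i ≠ 0)
    (hpn : ∀ i, p i ∣ Finset.univ.lcm p) :
    Function.Surjective (phiHom p (Finset.univ.lcm p) hpn) := by
  set n := Finset.univ.lcm p with hndef
  have hn0 : n ≠ 0 := by
    intro h
    rw [hndef, Finset.lcm_eq_zero_iff] at h
    obtain ⟨i, -, hi⟩ := h
    exact hp0 i hi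
  set H := AddSubgroup.comap (Int.castAddHom (ZMod n)) (phiHom p n hpn).range with hH
  obtain ⟨a, ha⟩ := Int.subgroup_cyclic H
  have hdvd : ∀ x : ℤ, x ∈ H ↔ a ∣ x := by
    intro x
    rw [ha, AddSubgroup.mem_closure_singleton]
    constructor
    · rintro ⟨k, rfl⟩
      exact ⟨k, by rw [zsmul_eq_mul, Int.cast_id, mul_comm]⟩
    · rintro ⟨k, rfl⟩
      exact ⟨k, by rw [zsmul_eq_mul, Int.cast_id, mul_comm]⟩
  have hnH : a ∣ (n : ℤ) := by
    rw [← hdvd, hH, AddSubgroup.mem_comap]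
    have h0 : (Int.castAddHom (ZMod n)) ((n : ℕ) : ℤ) = 0 := by simp
    rw [h0]
    exact zero_mem _
  have hiH : ∀ i, a ∣ ((n / p i : ℕ) : ℤ) := by
    intro i
    rw [← hdvd, hH, AddSubgroup.mem_comap]
    have h1 := phiHom_single_mem p n hpn i 1
    rw [Int.cast_one, one_mul] at h1
    show (((n / p i : ℕ) : ℤ) : ZMod n) ∈ _
    rw [Int.cast_natCast]
    exact h1
  set d := a.natAbs with hd
  have hdn : d ∣ n := by
    rw [← Int.natAbs_natCast n]; exact Int.natAbs_dvd_natAbs.mpr hnH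
  have hdni : ∀ i, d ∣ n / p i := by
    intro i
    rw [← Int.natAbs_natCast (n / p i)]; exact Int.natAbs_dvd_natAbs.mpr (hiH i)
  have hd0 : d ≠ 0 := by
    intro h
    have : a = 0 := Int.natAbs_eq_zero.mp h
    rw [this] at hnH
    exact hn0 (by exact_mod_cast zero_dvd_iff.mp hnH)
  have hd1 : d = 1 := by
    have h2 : ∀ i, p i ∣ n / d := by
      intro i
      obtain ⟨k, hk⟩ := hdni i
      have hn' : n = d * (p i * k) := by
        rw [← Nat.mul_div_cancel' (hpn i), hk]; ring
      rw [hn', Nat.mul_div_cancel_left _ (Nat.pos_of_ne_zero hd0)]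
      exact ⟨k, rfl⟩
    have hlcm : n ∣ n / d := hndef ▸ Finset.lcm_dvd (fun i _ => h2 i)
    have hpos : 0 < n / d :=
      Nat.div_pos (Nat.le_of_dvd (Nat.pos_of_ne_zero hn0) hdn) (Nat.pos_of_ne_zero hd0)
    have heq : n / d = n := le_antisymm (Nat.div_le_self n d) (Nat.le_of_dvd hpos hlcm)
    have := Nat.div_mul_cancel hdn
    rw [heq] at this
    nlinarith [Nat.pos_of_ne_zero hn0]
  intro y
  obtain ⟨x, rfl⟩ := ZMod.intCast_surjective y
  have ha1 : a.natAbs = 1 := by omega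
  have hxH : x ∈ H := (hdvd x).mpr (by rw [← Int.natAbs_dvd, ha1]; exact one_dvd x)
  exact hxH

end Aux4

theorem stmt3 {t : ℕ} (p : Fin (t+1) → ℕ) (hp : ∀ i, 2 ≤ p i) :
    Nat.card (AddCommGroup.torsion (StringGroup p)) =
      (∏ i, p i) / (Finset.univ.lcm p) := by
  classical
  haveI : ∀ i, NeZero (p i) := fun i => ⟨by have := hp i; omega⟩
  set n := Finset.univ.lcm p with hndef
  have hpn : ∀ i, p i ∣ n := fun i => Finset.dvd_lcm (Finset.mem_univ i)
  have hn0 : n ≠ 0 := by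
    intro h
    rw [hndef, Finset.lcm_eq_zero_iff] at h
    obtain ⟨i, -, hi⟩ := h
    have := hp i; omega
  haveI : NeZero n := ⟨hn0⟩
  have hker := mem_stringClosure_iff p n hpn hn0
  let πbar : StringGroup p →+ (∀ i, ZMod (p i)) :=
    QuotientAddGroup.lift _ (piCastHom p) (fun v hv => ((hker v).mp hv).2)
  have nsmul_zero_pi : ∀ w : ∀ i, ZMod (p i), n • w = 0 := by
    intro w; funext k
    rw [Pi.smul_apply, Pi.zero_apply, nsmul_eq_mul,
      (ZMod.natCast_eq_zero_iff n (p k)).mpr (hpn k), zero_mul]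
  have tor_mk : ∀ v : Fin (t+1) → ℤ, rhoHom p n v = 0 →
      IsOfFinAddOrder (QuotientAddGroup.mk v : StringGroup p) := by
    intro v hv
    rw [isOfFinAddOrder_iff_nsmul_eq_zero]
    refine ⟨n, Nat.pos_of_ne_zero hn0, ?_⟩
    have hm : (n • (QuotientAddGroup.mk v : StringGroup p)) = QuotientAddGroup.mk (n • v) :=
      (map_nsmul (QuotientAddGroup.mk' (AddSubgroup.closure (stringRelators p))) n v).symm
    rw [hm]
    rw [QuotientAddGroup.eq_zero_iff, hker]
    constructor
    · rw [map_nsmul, hv, smul_zero]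
    · rw [map_nsmul]
      exact nsmul_zero_pi _
  have tor_rho : ∀ v : Fin (t+1) → ℤ,
      IsOfFinAddOrder (QuotientAddGroup.mk v : StringGroup p) → rhoHom p n v = 0 := by
    intro v hv
    obtain ⟨m, hm0, hm⟩ := isOfFinAddOrder_iff_nsmul_eq_zero.mp hv
    have hmk : QuotientAddGroup.mk (m • v) = (0 : StringGroup p) :=
      (map_nsmul (QuotientAddGroup.mk' (AddSubgroup.closure (stringRelators p))) m v).trans hm
    rw [QuotientAddGroup.eq_zero_iff, hker] at hmk
    have h1 : rhoHom p n (m • v) = 0 := hmk.1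
    rw [map_nsmul, nsmul_eq_mul] at h1
    have hm' : (m : ℤ) ≠ 0 := by exact_mod_cast hm0.ne'
    exact (mul_eq_zero.mp h1).resolve_left hm'
  let h : AddCommGroup.torsion (StringGroup p) →+ (∀ i, ZMod (p i)) :=
    πbar.comp (AddSubgroup.subtype _)
  have hinj : Function.Injective h := by
    rw [injective_iff_map_eq_zero]
    rintro ⟨q, hq⟩ hq0
    obtain ⟨v, rfl⟩ := QuotientAddGroup.mk_surjective q
    have hπ : piCastHom p v = 0 := hq0
    have hρ : rhoHom p n v = 0 := tor_rho v ((AddCommGroup.mem_torsion _).mp hq)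
    have hz : QuotientAddGroup.mk v = (0 : StringGroup p) := by
      rw [QuotientAddGroup.eq_zero_iff, hker]; exact ⟨hρ, hπ⟩
    exact Subtype.ext hz
  let φ := phiHom p n hpn
  have hrange : h.range = φ.ker := by
    apply le_antisymm
    · rintro b ⟨⟨q, hq⟩, rfl⟩
      obtain ⟨v, rfl⟩ := QuotientAddGroup.mk_surjective q
      have hρ : rhoHom p n v = 0 := tor_rho v ((AddCommGroup.mem_torsion _).mp hq)
      show φ (piCastHom p v) = 0
      rw [phiHom_piCast, hρ, Int.cast_zero]
    · intro b hb
      set v' : Fin (t+1) → ℤ := fun i => (ZMod.cast (b i) : ℤ) with hv'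
      have hπv' : piCastHom p v' = b := by
        funext i; exact ZMod.intCast_zmod_cast (b i)
      have hφ : ((rhoHom p n v' : ℤ) : ZMod n) = 0 := by
        rw [← phiHom_piCast p n hpn v', hπv']; exact hb
      obtain ⟨m, hm⟩ := (ZMod.intCast_zmod_eq_zero_iff_dvd _ n).mp hφ
      set v : Fin (t+1) → ℤ := v' - Pi.single 0 ((p 0 : ℤ) * m) with hv
      have hρsingle : rhoHom p n (Pi.single (0 : Fin (t+1)) ((p 0 : ℤ) * m)) = (n : ℤ) * m := by
        rw [rhoHom_apply, Finset.sum_eq_single 0]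
        · rw [Pi.single_eq_same, mul_comm (p 0 : ℤ) m, mul_assoc, ← Nat.cast_mul,
            Nat.mul_div_cancel' (hpn 0), mul_comm]
        · intro k _ hk; rw [Pi.single_eq_of_ne hk, zero_mul]
        · simp
      have hρv : rhoHom p n v = 0 := by
        rw [hv, map_sub, hm, hρsingle, sub_self]
      have hπsingle : piCastHom p (Pi.single (0 : Fin (t+1)) ((p 0 : ℤ) * m)) = 0 := by
        funext k
        rw [piCastHom_apply, Pi.zero_apply]
        rcases eq_or_ne k 0 with rfl | hk
        · rw [Pi.single_eq_same]
          push_cast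
          rw [ZMod.natCast_self, zero_mul]
        · rw [Pi.single_eq_of_ne hk, Int.cast_zero]
      have hπv : piCastHom p v = b := by
        rw [hv, map_sub, hπv', hπsingle, sub_zero]
      exact ⟨⟨QuotientAddGroup.mk v, (AddCommGroup.mem_torsion _).mpr (tor_mk v hρv)⟩, hπv⟩
  have hsurj : Function.Surjective φ :=
    phiHom_lcm_surjective p (fun i => by have := hp i; omega) hpn
  have e1 : Nat.card (AddCommGroup.torsion (StringGroup p)) = Nat.card φ.ker := by
    apply Nat.card_congr
    exact (Equiv.ofInjective h hinj).trans
      (Equiv.setCongr (by rw [← AddMonoidHom.coe_range, hrange]))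
  have e2 : Nat.card ((∀ i, ZMod (p i)) ⧸ φ.ker) = n := by
    rw [Nat.card_congr (QuotientAddGroup.quotientKerEquivOfSurjective φ hsurj).toEquiv,
      Nat.card_zmod]
  have e3 : Nat.card (∀ i, ZMod (p i)) = ∏ i, p i := by
    rw [Nat.card_pi]
    exact Finset.prod_congr rfl fun i _ => Nat.card_zmod (p i)
  have e4 := AddSubgroup.card_eq_card_quotient_mul_card_addSubgroup φ.ker
  rw [e2, e3] at e4
  rw [e1, e4, Nat.mul_div_cancel_left _ (Nat.pos_of_ne_zero hn0)]
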